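/- Let A ⊆ X be bounded and ε ≥ 0. If for every sequence (x_n) in A the intersection over k of the norm-closed convex hulls of ({x_n : n ≥ k} + ε·B_X) is nonempty, then A is 2ε-weakly relatively compact, i.e., every element of the weak*-closure of A in X** has distance at most 2ε from X. -/

import Mathlib

noncomputable section
open Filter Topology Set NormedSpace Pointwise

variable {X : Type*} [NormedAddCommGroup X] [NormedSpace ℝ X] [CompleteSpace X]

/-- `B` is a boundary for `X`: a subset of the dual unit sphere on which every
element of `X` attains its norm. -/
def IsBoundary (B : Set (StrongDual ℝ X)) : Prop :=
  (∀ f ∈ B, ‖f‖ = 1) ∧ ∀ x : X, ∃ f ∈ B, f x = ‖x‖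

/-- The closure of `S` in the topology `σ_B` of pointwise convergence on `B`. -/
def sigmaClosure (B : Set (StrongDual ℝ X)) (S : Set X) : Set X :=
  {x | ∀ ε > (0 : ℝ), ∀ F : Finset (StrongDual ℝ X), (F : Set (StrongDual ℝ X)) ⊆ B →
    ∃ y ∈ S, ∀ f ∈ F, |f x - f y| < ε}

/-- The weak*-closure of a set of functionals (pointwise convergence on the predual). -/
def weakStarClosure {Y : Type*} [NormedAddCommGroup Y] [NormedSpace ℝ Y]
    (S : Set (StrongDual ℝ Y)) : Set (StrongDual ℝ Y) :=
  {φ | ∀ ε > (0 : ℝ), ∀ F : Finset Y, ∃ ψ ∈ S, ∀ y ∈ F, |φ y - ψ y| < ε}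

private lemma le_of_all_pos {a b : ℝ} (h : ∀ η : ℝ, 0 < η → a ≤ b + η) : a ≤ b := by
  by_contra h'
  push_neg at h'
  have := h ((a - b)/2) (by linarith)
  linarith

private lemma opnorm_le_of_ball {Y : Type*} [NormedAddCommGroup Y] [NormedSpace ℝ Y]
    (ψ : Y →L[ℝ] ℝ) (c : ℝ) (hc : 0 ≤ c) (h : ∀ g : Y, ‖g‖ ≤ 1 → ψ g ≤ c) : ‖ψ‖ ≤ c := by
  refine ψ.opNorm_le_bound hc (fun g => ?_)
  rcases eq_or_ne g 0 with rfl | hg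
  · simp [hc]
  · have hn : 0 < ‖g‖ := norm_pos_iff.mpr hg
    have hunit : ‖(‖g‖⁻¹ • g)‖ ≤ 1 := by
      rw [norm_smul, norm_inv, norm_norm, inv_mul_cancel₀ hn.ne']
    have h1 := h (‖g‖⁻¹ • g) hunit
    have h2 := h (-(‖g‖⁻¹ • g)) (by rwa [norm_neg])
    rw [map_smul, smul_eq_mul] at h1
    rw [map_neg, map_smul, smul_eq_mul] at h2
    have e1 := mul_le_mul_of_nonneg_left h1 hn.le
    have e2 := mul_le_mul_of_nonneg_left h2 hn.le
    have e : ‖g‖ * (‖g‖⁻¹ * ψ g) = ψ g := by field_simp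
    rw [e] at e1
    rw [mul_neg, e] at e2
    rw [Real.norm_eq_abs, abs_le]
    constructor <;> nlinarith

private lemma sep_lemma (φ : StrongDual ℝ (StrongDual ℝ X)) (c : ℝ) (hc : 0 ≤ c)
    (hd : ∀ z : X, c < ‖φ - inclusionInDoubleDual ℝ X z‖) (l : List X) :
    ∃ f : StrongDual ℝ X, ‖f‖ ≤ 1 ∧ ∀ z ∈ l, c < φ f - f z := by
  by_contra hcon
  push_neg at hcon
  -- hcon : ∀ f, ‖f‖ ≤ 1 → ∃ z ∈ l, φ f - f z ≤ c
  obtain rfl | hne := eq_or_ne l []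
  · obtain ⟨z, hz, -⟩ := hcon 0 (by simp)
    exact (List.not_mem_nil hz).elim
  set n := l.length with hn
  -- the linear map to ℝ^n
  let L : StrongDual ℝ X →ₗ[ℝ] (Fin n → ℝ) :=
    { toFun := fun f i => φ f - f (l.get i)
      map_add' := by intro f g; funext i; simp; ring
      map_smul' := by intro r f; funext i; simp; ring }
  set s : Set (Fin n → ℝ) := {a | ∀ i, c < a i} with hs
  set t : Set (Fin n → ℝ) := L '' (Metric.closedBall 0 1) with ht
  have hsopen : IsOpen s := by
    have : s = Set.pi Set.univ (fun _ : Fin n => Ioi c) := by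
      ext a; simp [hs, Set.mem_pi]
    rw [this]
    exact isOpen_set_pi Set.finite_univ (fun _ _ => isOpen_Ioi)
  have hsconv : Convex ℝ s := by
    have : s = Set.pi Set.univ (fun _ : Fin n => Ioi c) := by
      ext a; simp [hs, Set.mem_pi]
    rw [this]
    exact convex_pi (fun _ _ => convex_Ioi c)
  have htconv : Convex ℝ t := (convex_closedBall (0 : StrongDual ℝ X) 1).linear_image L
  have hdisj : Disjoint s t := by
    rw [Set.disjoint_left]
    rintro a ha ⟨g, hg, rfl⟩
    rw [Metric.mem_closedBall, dist_zero_right] at hg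
    obtain ⟨z, hz, hzle⟩ := hcon g hg
    obtain ⟨i, hi⟩ := List.get_of_mem hz
    have := ha i
    simp only [L, LinearMap.coe_mk, AddHom.coe_mk] at this
    rw [hi] at this
    linarith
  obtain ⟨F, u, hFs, hFt⟩ := geometric_hahn_banach_open hsconv hsopen htconv hdisj
  -- coefficients
  set lam : Fin n → ℝ := fun i => F (fun j => if i = j then 1 else 0) with hlam
  have hFsum : ∀ a : Fin n → ℝ, F a = ∑ i, a i * lam i := by
    intro a
    have := (F.toLinearMap).pi_apply_eq_sum_univ a
    simpa [smul_eq_mul] using this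
  -- u ≤ 0 since 0 ∈ t
  have hu0 : u ≤ 0 := by
    have := hFt (L 0) ⟨0, by simp, rfl⟩
    simpa using this
  -- each lam i ≤ 0
  have hlamnp : ∀ i, lam i ≤ 0 := by
    intro i
    by_contra hpos
    push_neg at hpos
    set S : ℝ := ∑ j, (c + 1) * lam j with hS
    set T : ℝ := max ((u - S) / lam i) 0 with hT
    have hTnn : 0 ≤ T := le_max_right _ _
    set a : Fin n → ℝ := fun j => if i = j then c + 1 + T else c + 1 with ha
    have has : a ∈ s := by
      intro j
      by_cases hij : i = j <;> simp [ha, hij] <;> linarith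
    have hFa := hFs a has
    rw [hFsum a] at hFa
    have hsplit : ∑ j, a j * lam j = S + T * lam i := by
      have e1 : ∀ j, a j * lam j = (c + 1) * lam j + (if i = j then T * lam j else 0) := by
        intro j
        by_cases hij : i = j <;> simp [ha, hij] <;> ring
      calc ∑ j, a j * lam j = ∑ j, ((c + 1) * lam j + (if i = j then T * lam j else 0)) :=
            Finset.sum_congr rfl (fun j _ => e1 j)
        _ = S + T * lam i := by
            rw [Finset.sum_add_distrib, Finset.sum_ite_eq]
            simp [hS]
    rw [hsplit] at hFa
    have hTge : (u - S) / lam i ≤ T := le_max_left _ _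
    have := mul_le_mul_of_nonneg_right hTge hpos.le
    rw [div_mul_cancel₀ _ hpos.ne'] at this
    linarith
  -- the sum of the coefficients is negative
  set sig : ℝ := ∑ j, lam j with hsig
  have hsigneg : sig < 0 := by
    have ha0 : (fun _ : Fin n => c + 1) ∈ s := fun j => by show c < c + 1; linarith
    have := hFs _ ha0
    rw [hFsum] at this
    have he : ∑ i, (c + 1) * lam i = (c + 1) * sig := by rw [hsig, Finset.mul_sum]
    have h1 : (c + 1) * sig < u := by rw [← he]; exact this
    nlinarith
  -- c * sig ≤ u
  have hcsig : c * sig ≤ u := by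
    apply le_of_all_pos
    intro η hη
    have hη' : 0 < η / (-sig) := div_pos hη (by linarith)
    have ha : (fun _ : Fin n => c + η / (-sig)) ∈ s := fun j => by
      show c < c + η / (-sig); linarith
    have := hFs _ ha
    rw [hFsum] at this
    have he : ∑ i, (c + η / (-sig)) * lam i = (c + η / (-sig)) * sig := by
      rw [hsig, Finset.mul_sum]
    rw [he] at this
    have he2 : (η / (-sig)) * sig = -η := by
      rw [div_mul_eq_mul_div, mul_div_assoc, div_neg, div_self hsigneg.ne]
      ring
    nlinarith
  -- define z
  set z : X := sig⁻¹ • ∑ i, lam i • (l.get i) with hz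
  have hzval : ∀ g : StrongDual ℝ X, ‖g‖ ≤ 1 → φ g - g z ≤ c := by
    intro g hg
    have h1 := hFt (L g) ⟨g, by simpa [Metric.mem_closedBall, dist_zero_right] using hg, rfl⟩
    rw [hFsum] at h1
    have hgz : sig * g z = ∑ i, lam i * g (l.get i) := by
      have hsz : sig • z = ∑ i, lam i • l.get i := smul_inv_smul₀ hsigneg.ne _
      calc sig * g z = g (sig • z) := by
            have hms := g.map_smul sig z
            rw [smul_eq_mul] at hms
            exact hms.symm
        _ = ∑ i, lam i * g (l.get i) := by
            rw [hsz, map_sum]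
            exact Finset.sum_congr rfl fun i _ => by rw [map_smul, smul_eq_mul]
    have h2 : ∑ i, (L g) i * lam i = sig * φ g - sig * g z := by
      calc ∑ i, (L g) i * lam i = ∑ i, (lam i * φ g - lam i * g (l.get i)) :=
            Finset.sum_congr rfl (fun i _ => by
              simp only [L, LinearMap.coe_mk, AddHom.coe_mk]; ring)
        _ = (∑ i, lam i) * φ g - ∑ i, lam i * g (l.get i) := by
            rw [Finset.sum_sub_distrib, Finset.sum_mul]
        _ = sig * φ g - sig * g z := by rw [hgz, hsig]
    rw [h2] at h1
    by_contra hcon2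
    push_neg at hcon2
    have hp : 0 < φ g - g z - c := by linarith
    have := mul_neg_of_neg_of_pos hsigneg hp
    nlinarith
  have hnorm : ‖φ - inclusionInDoubleDual ℝ X z‖ ≤ c := by
    apply opnorm_le_of_ball _ c hc
    intro g hg
    have := hzval g hg
    simpa [NormedSpace.dual_def] using this
  exact absurd hnorm (not_le.mpr (hd z))

/-- `A` is `δ`-weakly relatively compact: every element of the weak*-closure of
`A` in the bidual is within distance `δ` of `X`. -/
def EpsWRC (A : Set X) (δ : ℝ) : Prop :=
  ∀ φ ∈ weakStarClosure ((inclusionInDoubleDual ℝ X) '' A),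
    Metric.infDist φ (Set.range (inclusionInDoubleDual ℝ X)) ≤ δ

set_option maxHeartbeats 1000000 in
theorem chains_imp_epsWRC (A : Set X) (hA : Bornology.IsBounded A)
    (ε : ℝ) (hε : 0 ≤ ε)
    (h : ∀ x : ℕ → X, (∀ n, x n ∈ A) →
      (⋂ k : ℕ, closure (convexHull ℝ
        ({y : X | ∃ n ≥ k, y = x n} + ε • Metric.closedBall (0 : X) 1))).Nonempty) :
    EpsWRC A (2 * ε) := by
  classical
  intro φ hφ
  by_contra hcon0
  push_neg at hcon0
  set D := Metric.infDist φ (Set.range (inclusionInDoubleDual ℝ X)) with hD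
  set c : ℝ := (2 * ε + D) / 2 with hc
  have hc1 : 2 * ε < c := by rw [hc]; linarith
  have hc2 : c < D := by rw [hc]; linarith
  have hc0 : 0 ≤ c := by linarith
  have hd : ∀ z : X, c < ‖φ - inclusionInDoubleDual ℝ X z‖ := by
    intro z
    have h1 : D ≤ dist φ (inclusionInDoubleDual ℝ X z) :=
      Metric.infDist_le_dist_of_mem (Set.mem_range_self z)
    rw [dist_eq_norm] at h1
    linarith
  -- choose separating functionals
  have sep := fun l : List X => sep_lemma φ c hc0 hd l
  choose F hF1 hF2 using sep
  -- choose approximating points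
  have pick : ∀ p : List X, ∃ a, a ∈ A ∧ ∀ i ≤ p.length,
      |φ (F (p.take i)) - F (p.take i) a| < 1 / (p.length + 1) := by
    intro p
    have hpos : (0:ℝ) < 1 / (p.length + 1) := by positivity
    obtain ⟨ψ, hψA, hψ⟩ := hφ (1 / (p.length + 1)) hpos
      ((Finset.range (p.length + 1)).image (fun i => F (p.take i)))
    obtain ⟨a, haA, rfl⟩ := hψA
    refine ⟨a, haA, fun i hi => ?_⟩
    have hmem : F (p.take i) ∈ (Finset.range (p.length + 1)).image (fun i => F (p.take i)) :=
      Finset.mem_image.mpr ⟨i, Finset.mem_range.mpr (Nat.lt_succ_of_le hi), rfl⟩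
    have := hψ (F (p.take i)) hmem
    simpa [NormedSpace.dual_def] using this
  choose G hG1 hG2 using pick
  -- the recursive prefixes
  obtain ⟨l, hl0, hlsucc⟩ : ∃ l : ℕ → List X, l 0 = [] ∧ ∀ n, l (n + 1) = l n ++ [G (l n)] :=
    ⟨fun n => Nat.rec [] (fun _ p => p ++ [G p]) n, rfl, fun n => rfl⟩
  set x : ℕ → X := fun n => G (l n) with hx
  set f : ℕ → StrongDual ℝ X := fun n => F (l n) with hf
  have hlen : ∀ n, (l n).length = n := by
    intro n
    induction n with
    | zero => rw [hl0]; rfl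
    | succ n ih => rw [hlsucc, List.length_append, ih]; rfl
  have htake : ∀ i n, i ≤ n → (l n).take i = l i := by
    intro i n hin
    induction n with
    | zero =>
      have : i = 0 := Nat.le_zero.mp hin
      subst this; rw [hl0]; rfl
    | succ n ih =>
      rcases Nat.lt_or_ge i (n + 1) with hlt | hge
      · have hin' : i ≤ n := Nat.lt_succ_iff.mp hlt
        rw [hlsucc, List.take_append_of_le_length (by rw [hlen]; exact hin'), ih hin']
      · have hieq : i = n + 1 := le_antisymm hin hge
        subst hieq
        exact List.take_of_length_le (le_of_eq (hlen (n+1)))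
  have hmeml : ∀ n i, i < n → x i ∈ l n := by
    intro n
    induction n with
    | zero => intro i hi; omega
    | succ n ih =>
      intro i hi
      rw [hlsucc]
      rcases Nat.lt_or_ge i n with hlt | hge
      · exact List.mem_append_left _ (ih i hlt)
      · have : i = n := by omega
        subst this
        exact List.mem_append_right _ (List.mem_singleton.mpr rfl)
  have hxA : ∀ n, x n ∈ A := fun n => hG1 (l n)
  have hfn : ∀ n, ‖f n‖ ≤ 1 := fun n => hF1 (l n)
  have hsep : ∀ n i, i < n → c < φ (f n) - f n (x i) :=
    fun n i hi => hF2 (l n) (x i) (hmeml n i hi)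
  have happ : ∀ n i, i ≤ n → |φ (f i) - f i (x n)| < 1 / (n + 1) := by
    intro n i hi
    have := hG2 (l n) i (by rw [hlen]; exact hi)
    rw [htake i n hi, hlen] at this
    exact this
  -- the point y
  obtain ⟨y, hy⟩ := h x hxA
  rw [Set.mem_iInter] at hy
  -- Step A
  have stepA : ∀ n : ℕ, φ (f n) - f n y ≤ ε := by
    intro n
    apply le_of_all_pos
    intro η hη
    obtain ⟨K, hK⟩ := exists_nat_one_div_lt (show (0:ℝ) < η/2 by linarith)
    set k := max n K with hk
    have hkn : n ≤ k := le_max_left _ _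
    have hkK : (1:ℝ)/(k+1) < η/2 := by
      apply lt_of_le_of_lt _ hK
      apply one_div_le_one_div_of_le (by positivity)
      have : (K:ℝ) ≤ k := Nat.cast_le.mpr (le_max_right _ _)
      linarith
    obtain ⟨zz, hzz, hdist⟩ := Metric.mem_closure_iff.mp (hy k) (η/2) (by linarith)
    have hsub : convexHull ℝ ({v : X | ∃ m ≥ k, v = x m} + ε • Metric.closedBall (0:X) 1)
        ⊆ {v : X | φ (f n) - 1/(k+1) - ε ≤ f n v} := by
      apply convexHull_min _
        (convex_halfSpace_ge ⟨fun a b => map_add (f n) a b, fun r a => map_smul (f n) r a⟩ _)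
      rintro v hv
      rw [Set.mem_add] at hv
      obtain ⟨sv, hsv, w, hw, rfl⟩ := hv
      obtain ⟨m, hm, rfl⟩ := hsv
      obtain ⟨b, hb, rfl⟩ := hw
      rw [Metric.mem_closedBall, dist_zero_right] at hb
      have h1 : |φ (f n) - f n (x m)| < 1/(m+1) := happ m n (le_trans hkn hm)
      have h2 : (1:ℝ)/(m+1) ≤ 1/(k+1) := by
        apply one_div_le_one_div_of_le (by positivity)
        have : (k:ℝ) ≤ m := Nat.cast_le.mpr hm
        linarith
      have h3 : |f n (ε • b)| ≤ ε := by
        have hna : ‖f n (ε • b)‖ ≤ ‖f n‖ * ‖ε • b‖ := (f n).le_opNorm _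
        have hnb : ‖ε • b‖ ≤ ε := by
          rw [norm_smul, Real.norm_eq_abs, abs_of_nonneg hε]
          nlinarith [norm_nonneg b]
        rw [Real.norm_eq_abs] at hna
        nlinarith [norm_nonneg (f n), abs_nonneg (f n (ε • b)), hfn n, norm_nonneg (ε • b)]
      show φ (f n) - 1/(k+1) - ε ≤ f n (x m + ε • b)
      rw [map_add]
      rw [abs_lt] at h1
      rw [abs_le] at h3
      linarith [h1.1, h1.2, h3.1]
    have h4 := hsub hzz
    have h5 : |f n (y - zz)| ≤ η/2 := by
      have hna : ‖f n (y - zz)‖ ≤ ‖f n‖ * ‖y - zz‖ := (f n).le_opNorm _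
      rw [Real.norm_eq_abs] at hna
      rw [dist_eq_norm] at hdist
      nlinarith [norm_nonneg (f n), norm_nonneg (y - zz), hfn n]
    have h6 : f n y - f n zz = f n (y - zz) := by rw [map_sub]
    rw [abs_le] at h5
    have h7 : φ (f n) - 1/(k+1) - ε ≤ f n zz := h4
    linarith [h5.1, h5.2]
  -- Step B
  have stepB : ∀ δ : ℝ, 0 < δ → c ≤ 2*ε + δ := by
    intro δ hδ
    obtain ⟨zz, hzz, hdist⟩ := Metric.mem_closure_iff.mp (hy 0) (δ/2) (by linarith)
    have hrw : convexHull ℝ ({v : X | ∃ m ≥ 0, v = x m} + ε • Metric.closedBall (0:X) 1)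
        = convexHull ℝ {v : X | ∃ m ≥ 0, v = x m} + ε • Metric.closedBall (0:X) 1 := by
      rw [convexHull_add]
      congr 1
      exact Convex.convexHull_eq ((convex_closedBall (0:X) 1).smul ε)
    rw [hrw, Set.mem_add] at hzz
    obtain ⟨z', hz', w, hw, rfl⟩ := hzz
    rw [convexHull_eq_union_convexHull_finite_subsets] at hz'
    simp only [Set.mem_iUnion] at hz'
    obtain ⟨t, ht, hz'⟩ := hz'
    set gi : X → ℕ := fun v => if hv : ∃ m, v = x m then hv.choose else 0 with hgi
    have hgiv : ∀ v ∈ t, v = x (gi v) := by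
      intro v hv
      obtain ⟨m, _, hvm⟩ := ht hv
      have hex : ∃ m, v = x m := ⟨m, hvm⟩
      simp only [hgi, dif_pos hex]
      exact hex.choose_spec
    set N := (t.sup gi) + 1 with hN
    have htsub : (t : Set X) ⊆ {v : X | f N v ≤ φ (f N) - c} := by
      intro v hv
      have h1 : gi v < N := Nat.lt_succ_of_le (Finset.le_sup hv)
      have h2 := hsep N (gi v) h1
      rw [← hgiv v hv] at h2
      show f N v ≤ φ (f N) - c
      linarith
    have hz'le : f N z' ≤ φ (f N) - c :=
      convexHull_min htsub
        (convex_halfSpace_le ⟨fun a b => map_add (f N) a b, fun r a => map_smul (f N) r a⟩ _) hz'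
    obtain ⟨b, hb, rfl⟩ := hw
    rw [Metric.mem_closedBall, dist_zero_right] at hb
    have h3 : |f N (ε • b)| ≤ ε := by
      have hna : ‖f N (ε • b)‖ ≤ ‖f N‖ * ‖ε • b‖ := (f N).le_opNorm _
      have hnb : ‖ε • b‖ ≤ ε := by
        rw [norm_smul, Real.norm_eq_abs, abs_of_nonneg hε]
        nlinarith [norm_nonneg b]
      rw [Real.norm_eq_abs] at hna
      nlinarith [norm_nonneg (f N), abs_nonneg (f N (ε • b)), hfn N, norm_nonneg (ε • b)]
    have h5 : |f N (y - (z' + ε • b))| ≤ δ/2 := by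
      have hna : ‖f N (y - (z' + ε • b))‖ ≤ ‖f N‖ * ‖y - (z' + ε • b)‖ := (f N).le_opNorm _
      rw [Real.norm_eq_abs] at hna
      rw [dist_eq_norm] at hdist
      nlinarith [norm_nonneg (f N), norm_nonneg (y - (z' + ε • b)), hfn N]
    have h6 : f N y - f N z' - f N (ε • b) = f N (y - (z' + ε • b)) := by
      rw [map_sub, map_add]; ring
    have h7 := stepA N
    rw [abs_le] at h3 h5
    linarith [h3.1, h3.2, h5.1, h5.2]
  have hfinal : c ≤ 2*ε := le_of_all_pos stepB
  linarith
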